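/- Let P = conv(v1,...,v5) be a convex lattice pentagon (vertices ordered cyclically) such that the edge from v1 to v5 contains exactly 5 lattice points (lattice length 4). Then P contains at least 9 boundary lattice points and at least 1 interior lattice point, or at least 8 boundary lattice points and at least 2 interior lattice points; in either case B + 2I − 2 ≥ 9. -/

import Mathlib

/-- Embedding of lattice points of `ℤ²` into the real plane. -/
def toR (p : ℤ × ℤ) : ℝ × ℝ := ((p.1 : ℝ), (p.2 : ℝ))

namespace S19

/-- cross product of plane vectors -/
def cr (u w : ℝ × ℝ) : ℝ := u.1 * w.2 - u.2 * w.1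

lemma seg_mem (x y : ℝ × ℝ) (t : ℝ) (h0 : 0 ≤ t) (h1 : t ≤ 1) :
    (1 - t) • x + t • y ∈ segment ℝ x y :=
  ⟨1 - t, t, by linarith, h0, by ring, rfl⟩

lemma open_seg_mem (x y : ℝ × ℝ) (t : ℝ) (h0 : 0 < t) (h1 : t < 1) :
    (1 - t) • x + t • y ∈ openSegment ℝ x y :=
  ⟨1 - t, t, by linarith, h0, by ring, rfl⟩

lemma tri_interior {P : Set (ℝ × ℝ)} (hconv : Convex ℝ P) {a b c p : ℝ × ℝ}
    (ha : a ∈ P) (hb : b ∈ P) (hc : c ∈ P)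
    (h1 : 0 < cr (p - a) (c - a)) (h2 : 0 < cr (b - a) (p - a))
    (h3 : cr (p - a) (c - a) + cr (b - a) (p - a) < cr (b - a) (c - a)) :
    p ∈ interior P := by
  set D : ℝ := cr (b - a) (c - a) with hD
  have hDpos : 0 < D := lt_trans (by linarith) h3
  set U : Set (ℝ × ℝ) :=
    {q | 0 < (q.1 - a.1) * (c.2 - a.2) - (q.2 - a.2) * (c.1 - a.1) ∧
         0 < (b.1 - a.1) * (q.2 - a.2) - (b.2 - a.2) * (q.1 - a.1) ∧
         ((q.1 - a.1) * (c.2 - a.2) - (q.2 - a.2) * (c.1 - a.1)) +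
           ((b.1 - a.1) * (q.2 - a.2) - (b.2 - a.2) * (q.1 - a.1)) < D} with hU
  have hcont1 : Continuous fun q : ℝ × ℝ =>
      (q.1 - a.1) * (c.2 - a.2) - (q.2 - a.2) * (c.1 - a.1) :=
    ((continuous_fst.sub continuous_const).mul continuous_const).sub
      ((continuous_snd.sub continuous_const).mul continuous_const)
  have hcont2 : Continuous fun q : ℝ × ℝ =>
      (b.1 - a.1) * (q.2 - a.2) - (b.2 - a.2) * (q.1 - a.1) :=
    (continuous_const.mul (continuous_snd.sub continuous_const)).sub
      (continuous_const.mul (continuous_fst.sub continuous_const))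
  have hUopen : IsOpen U := by
    rw [hU]
    exact ((isOpen_lt continuous_const hcont1).inter
      ((isOpen_lt continuous_const hcont2).inter
        (isOpen_lt (hcont1.add hcont2) continuous_const)))
  have hUP : U ⊆ P := by
    rintro q ⟨hq1, hq2, hq3⟩
    set C1 : ℝ := (q.1 - a.1) * (c.2 - a.2) - (q.2 - a.2) * (c.1 - a.1) with hC1
    set C2 : ℝ := (b.1 - a.1) * (q.2 - a.2) - (b.2 - a.2) * (q.1 - a.1) with hC2
    set β : ℝ := C1 / D with hβ
    set γ : ℝ := C2 / D with hγ
    have hβpos : 0 < β := div_pos hq1 hDpos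
    have hγpos : 0 < γ := div_pos hq2 hDpos
    have hsum : β + γ < 1 := by
      rw [hβ, hγ, ← add_div, div_lt_one hDpos]; exact hq3
    -- r is the point on segment b c
    set s : ℝ := β + γ with hs
    have hspos : 0 < s := by positivity
    set r : ℝ × ℝ := (β / s) • b + (γ / s) • c with hr
    have hrP : r ∈ P := hconv hb hc (by positivity) (by positivity) (by field_simp; exact hs.symm)
    have hqP : q = (1 - s) • a + s • r := by
      have hcomp1 : D * (q.1 - a.1) = C1 * (b.1 - a.1) + C2 * (c.1 - a.1) := by
        rw [hC1, hC2, hD]; simp only [cr, Prod.fst_sub, Prod.snd_sub]; ring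
      have hcomp2 : D * (q.2 - a.2) = C1 * (b.2 - a.2) + C2 * (c.2 - a.2) := by
        rw [hC1, hC2, hD]; simp only [cr, Prod.fst_sub, Prod.snd_sub]; ring
      have hDne : D ≠ 0 := ne_of_gt hDpos
      have hsne : s ≠ 0 := ne_of_gt hspos
      have e1 : q.1 - a.1 = β * (b.1 - a.1) + γ * (c.1 - a.1) := by
        rw [hβ, hγ]
        field_simp
        linarith [hcomp1]
      have e2 : q.2 - a.2 = β * (b.2 - a.2) + γ * (c.2 - a.2) := by
        rw [hβ, hγ]
        field_simp
        linarith [hcomp2]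
      apply Prod.ext
      · simp only [hr, Prod.fst_add, Prod.smul_fst, smul_eq_mul]
        have : s * (β / s * b.1 + γ / s * c.1) = β * b.1 + γ * c.1 := by
          field_simp
        rw [this, hs]; linarith [e1]
      · simp only [hr, Prod.snd_add, Prod.smul_snd, smul_eq_mul]
        have : s * (β / s * b.2 + γ / s * c.2) = β * b.2 + γ * c.2 := by
          field_simp
        rw [this, hs]; linarith [e2]
    rw [hqP]
    exact hconv ha hrP (by linarith) (le_of_lt hspos) (by ring)
  have hpU : p ∈ U := by
    refine ⟨?_, ?_, ?_⟩ <;> simp only [cr] at h1 h2 h3 <;>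
      simp only [Prod.fst_sub, Prod.snd_sub] at h1 h2 h3 ⊢ <;> linarith
  exact interior_maximal hUP hUopen hpU

lemma lattice_finite {s : Set (ℝ × ℝ)} (hb : Bornology.IsBounded s) :
    {m : ℤ × ℤ | toR m ∈ s}.Finite := by
  obtain ⟨R, hR⟩ := hb.subset_closedBall 0
  apply (Set.finite_Icc (α := ℤ × ℤ) (-⌈R⌉, -⌈R⌉) (⌈R⌉, ⌈R⌉)).subset
  intro m hm
  have h1 : toR m ∈ Metric.closedBall (0 : ℝ × ℝ) R := hR hm
  rw [Metric.mem_closedBall, dist_zero_right, Prod.norm_def] at h1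
  have hx : |(m.1 : ℝ)| ≤ R := le_trans (le_max_left _ _) h1
  have hy : |(m.2 : ℝ)| ≤ R := le_trans (le_max_right _ _) h1
  rw [abs_le] at hx hy
  have hR' : (R : ℝ) ≤ (⌈R⌉ : ℝ) := Int.le_ceil R
  simp only [Set.mem_Icc, Prod.le_def]
  have c1 : ((-⌈R⌉ : ℤ) : ℝ) ≤ (m.1 : ℝ) := by push_cast; linarith [hx.1, hR']
  have c2 : ((-⌈R⌉ : ℤ) : ℝ) ≤ (m.2 : ℝ) := by push_cast; linarith [hy.1, hR']
  have c3 : (m.1 : ℝ) ≤ ((⌈R⌉ : ℤ) : ℝ) := by push_cast; linarith [hx.2, hR']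
  have c4 : (m.2 : ℝ) ≤ ((⌈R⌉ : ℤ) : ℝ) := by push_cast; linarith [hy.2, hR']
  exact ⟨⟨by exact_mod_cast c1, by exact_mod_cast c2⟩, ⟨by exact_mod_cast c3, by exact_mod_cast c4⟩⟩



lemma par_int {d1 d2 u1 u2 : ℤ} (hco : Int.gcd d1 d2 = 1) (h : u1 * d2 = u2 * d1) :
    ∃ k : ℤ, u1 = k * d1 ∧ u2 = k * d2 := by
  rcases eq_or_ne d1 0 with h0 | h0
  · subst h0
    have hd2 : d2 = 1 ∨ d2 = -1 := by
      have := hco; simp [Int.gcd] at this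
      omega
    have hu1 : u1 = 0 := by
      rcases hd2 with h' | h' <;> subst h' <;> omega
    refine ⟨u2 * d2, by simp [hu1], ?_⟩
    rcases hd2 with h' | h' <;> subst h' <;> ring
  · have hcop : IsCoprime d1 d2 := Int.isCoprime_iff_gcd_eq_one.mpr hco
    have hdvd : d1 ∣ u1 := by
      have : d1 ∣ u1 * d2 := ⟨u2, by linarith⟩
      exact hcop.dvd_of_dvd_mul_right this
    obtain ⟨k, hk⟩ := hdvd
    refine ⟨k, by rw [hk, mul_comm], ?_⟩
    have h2 : u2 * d1 = k * d2 * d1 := by rw [← h, hk]; ring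
    exact mul_right_cancel₀ h0 h2

lemma seg_count {p q : ℤ × ℤ} (hne : p ≠ q)
    (h : {m : ℤ × ℤ | toR m ∈ segment ℝ (toR p) (toR q)}.ncard = 5) :
    ∃ d1 d2 : ℤ, q.1 - p.1 = 4 * d1 ∧ q.2 - p.2 = 4 * d2 ∧ Int.gcd d1 d2 = 1 := by
  set Δ1 : ℤ := q.1 - p.1 with hΔ1
  set Δ2 : ℤ := q.2 - p.2 with hΔ2
  have hΔ : Δ1 ≠ 0 ∨ Δ2 ≠ 0 := by
    by_contra hcon
    push_neg at hcon
    exact hne (Prod.ext (by omega) (by omega)).symm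
  set G : ℕ := Int.gcd Δ1 Δ2 with hG
  have hGpos : 0 < G := Int.gcd_pos_iff.mpr hΔ
  have hgz : (G : ℤ) ≠ 0 := by exact_mod_cast hGpos.ne'
  obtain ⟨d1, hd1⟩ : ((G : ℤ)) ∣ Δ1 := Int.gcd_dvd_left Δ1 Δ2
  obtain ⟨d2, hd2⟩ : ((G : ℤ)) ∣ Δ2 := Int.gcd_dvd_right Δ1 Δ2
  have hdne : d1 ≠ 0 ∨ d2 ≠ 0 := by
    rcases hΔ with h' | h'
    · left; rintro rfl; rw [mul_zero] at hd1; exact h' hd1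
    · right; rintro rfl; rw [mul_zero] at hd2; exact h' hd2
  have hco : Int.gcd d1 d2 = 1 := by
    have e1 : d1 = Δ1 / (G : ℤ) := by rw [hd1, Int.mul_ediv_cancel_left _ hgz]
    have e2 : d2 = Δ2 / (G : ℤ) := by rw [hd2, Int.mul_ediv_cancel_left _ hgz]
    rw [e1, e2, hG]
    exact Int.gcd_div_gcd_div_gcd hGpos
  have hd1R : ((Δ1 : ℤ) : ℝ) = ((G : ℤ) : ℝ) * (d1 : ℝ) := by exact_mod_cast hd1
  have hd2R : ((Δ2 : ℤ) : ℝ) = ((G : ℤ) : ℝ) * (d2 : ℝ) := by exact_mod_cast hd2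
  have hS : {m : ℤ × ℤ | toR m ∈ segment ℝ (toR p) (toR q)} =
      (fun k : ℤ => (p.1 + k * d1, p.2 + k * d2)) '' Set.Icc (0 : ℤ) (G : ℤ) := by
    ext m
    simp only [Set.mem_setOf_eq, Set.mem_image, Set.mem_Icc]
    constructor
    · rintro ⟨A, B, hA, hB, hAB, hcomb⟩
      have hc1 : A * p.1 + B * q.1 = (m.1 : ℝ) := by
        have := congrArg Prod.fst hcomb
        simpa [toR, Prod.smul_fst] using this
      have hc2 : A * p.2 + B * q.2 = (m.2 : ℝ) := by
        have := congrArg Prod.snd hcomb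
        simpa [toR, Prod.smul_snd] using this
      set u1 : ℤ := m.1 - p.1 with hu1
      set u2 : ℤ := m.2 - p.2 with hu2
      have hr1 : ((u1 : ℤ) : ℝ) = B * ((Δ1 : ℤ) : ℝ) := by
        push_cast [hu1, hΔ1]
        linear_combination -hc1 + (p.1 : ℝ) * hAB
      have hr2 : ((u2 : ℤ) : ℝ) = B * ((Δ2 : ℤ) : ℝ) := by
        push_cast [hu2, hΔ2]
        linear_combination -hc2 + (p.2 : ℝ) * hAB
      have hcr : u1 * Δ2 = u2 * Δ1 := by
        have : ((u1 : ℤ) : ℝ) * ((Δ2 : ℤ) : ℝ) = ((u2 : ℤ) : ℝ) * ((Δ1 : ℤ) : ℝ) := by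
          rw [hr1, hr2]; ring
        exact_mod_cast this
      have hud : u1 * d2 = u2 * d1 := by
        have hgg : (G : ℤ) * (u1 * d2) = (G : ℤ) * (u2 * d1) := by
          rw [hd1, hd2] at hcr; linarith
        exact mul_left_cancel₀ hgz hgg
      obtain ⟨k, hk1, hk2⟩ := par_int hco hud
      have hkB : (k : ℝ) = B * ((G : ℤ) : ℝ) := by
        rcases hdne with h' | h'
        · have hd1r : (d1 : ℝ) ≠ 0 := by exact_mod_cast h'
          have hc : (k : ℝ) * (d1 : ℝ) = B * ((G : ℤ) : ℝ) * (d1 : ℝ) := by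
            have h1 : ((u1 : ℤ) : ℝ) = (k : ℝ) * (d1 : ℝ) := by exact_mod_cast hk1
            rw [h1, hd1R] at hr1
            linarith
          exact mul_right_cancel₀ hd1r hc
        · have hd2r : (d2 : ℝ) ≠ 0 := by exact_mod_cast h'
          have hc : (k : ℝ) * (d2 : ℝ) = B * ((G : ℤ) : ℝ) * (d2 : ℝ) := by
            have h1 : ((u2 : ℤ) : ℝ) = (k : ℝ) * (d2 : ℝ) := by exact_mod_cast hk2
            rw [h1, hd2R] at hr2
            linarith
          exact mul_right_cancel₀ hd2r hc
      have hB1 : B ≤ 1 := by linarith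
      have hGr0 : (0 : ℝ) ≤ ((G : ℤ) : ℝ) := by positivity
      have hk0 : (0 : ℝ) ≤ (k : ℝ) := by rw [hkB]; positivity
      have hkG : (k : ℝ) ≤ ((G : ℤ) : ℝ) := by rw [hkB]; nlinarith
      refine ⟨k, ⟨by exact_mod_cast hk0, by exact_mod_cast hkG⟩, ?_⟩
      exact Prod.ext (by omega) (by omega)
    · rintro ⟨k, ⟨hk0, hkG⟩, rfl⟩
      have hGr : (0 : ℝ) < ((G : ℤ) : ℝ) := by exact_mod_cast hGpos
      have hkr : (0 : ℝ) ≤ (k : ℝ) := by exact_mod_cast hk0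
      have hkGr : (k : ℝ) ≤ ((G : ℤ) : ℝ) := by exact_mod_cast hkG
      refine ⟨1 - (k : ℝ) / ((G : ℤ) : ℝ), (k : ℝ) / ((G : ℤ) : ℝ), ?_, by positivity,
        by ring, ?_⟩
      · have := div_le_one_of_le₀ hkGr (le_of_lt hGr)
        linarith
      · have hΔ1r : ((q.1 : ℝ) - (p.1 : ℝ)) = ((G : ℤ) : ℝ) * (d1 : ℝ) := by
          rw [← hd1R]; push_cast [hΔ1]; ring
        have hΔ2r : ((q.2 : ℝ) - (p.2 : ℝ)) = ((G : ℤ) : ℝ) * (d2 : ℝ) := by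
          rw [← hd2R]; push_cast [hΔ2]; ring
        have hGne : ((G : ℤ) : ℝ) ≠ 0 := ne_of_gt hGr
        apply Prod.ext
        · simp only [toR, Prod.fst_add, Prod.smul_fst, smul_eq_mul]
          push_cast
          field_simp
          linear_combination (k : ℝ) * hΔ1r
        · simp only [toR, Prod.snd_add, Prod.smul_snd, smul_eq_mul]
          push_cast
          field_simp
          linear_combination (k : ℝ) * hΔ2r
  rw [hS] at h
  have hinjf : Function.Injective (fun k : ℤ => (p.1 + k * d1, p.2 + k * d2)) := by
    intro x y hxy
    simp only [Prod.mk.injEq] at hxy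
    rcases hdne with h' | h'
    · have hx : x * d1 = y * d1 := by omega
      exact mul_right_cancel₀ h' hx
    · have hx : x * d2 = y * d2 := by omega
      exact mul_right_cancel₀ h' hx
  rw [Set.ncard_image_of_injective _ hinjf] at h
  rw [← Finset.coe_Icc, Set.ncard_coe_finset, Int.card_Icc] at h
  have hG4 : (G : ℤ) = 4 := by omega
  rw [hG4] at hd1 hd2
  exact ⟨d1, d2, by omega, by omega, hco⟩



structure Uni where
  a : ℤ
  b : ℤ
  c : ℤ
  d : ℤ
  e : ℤ
  t1 : ℤ
  t2 : ℤ
  hdet : a * d - b * c = e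
  he : e = 1 ∨ e = -1

namespace Uni

variable (T : Uni)

def g (p : ℤ × ℤ) : ℤ × ℤ :=
  (T.a * (p.1 - T.t1) + T.b * (p.2 - T.t2), T.c * (p.1 - T.t1) + T.d * (p.2 - T.t2))

def ginv (q : ℤ × ℤ) : ℤ × ℤ :=
  (T.e * (T.d * q.1 - T.b * q.2) + T.t1, T.e * (T.a * q.2 - T.c * q.1) + T.t2)

def F (p : ℝ × ℝ) : ℝ × ℝ :=
  ((T.a : ℝ) * (p.1 - T.t1) + (T.b : ℝ) * (p.2 - T.t2),
   (T.c : ℝ) * (p.1 - T.t1) + (T.d : ℝ) * (p.2 - T.t2))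

def Finv (q : ℝ × ℝ) : ℝ × ℝ :=
  ((T.e : ℝ) * ((T.d : ℝ) * q.1 - (T.b : ℝ) * q.2) + (T.t1 : ℝ),
   (T.e : ℝ) * ((T.a : ℝ) * q.2 - (T.c : ℝ) * q.1) + (T.t2 : ℝ))

lemma he2 : T.e * T.e = 1 := by rcases T.he with h | h <;> rw [h] <;> ring

lemma hdetR : (T.a : ℝ) * T.d - T.b * T.c = T.e := by exact_mod_cast T.hdet

lemma he2R : (T.e : ℝ) * T.e = 1 := by exact_mod_cast T.he2

lemma FinvF (x : ℝ × ℝ) : T.Finv (T.F x) = x := by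
  apply Prod.ext <;> simp only [F, Finv]
  · linear_combination (x.1 - (T.t1 : ℝ)) * ((T.e : ℝ) * T.hdetR + T.he2R)
  · linear_combination (x.2 - (T.t2 : ℝ)) * ((T.e : ℝ) * T.hdetR + T.he2R)

lemma FFinv (x : ℝ × ℝ) : T.F (T.Finv x) = x := by
  apply Prod.ext <;> simp only [F, Finv]
  · linear_combination x.1 * ((T.e : ℝ) * T.hdetR + T.he2R)
  · linear_combination x.2 * ((T.e : ℝ) * T.hdetR + T.he2R)

lemma ginvg (p : ℤ × ℤ) : T.ginv (T.g p) = p := by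
  have h := T.hdet
  have h2 := T.he2
  apply Prod.ext <;> simp only [g, ginv]
  · linear_combination (p.1 - T.t1) * (T.e * h + h2)
  · linear_combination (p.2 - T.t2) * (T.e * h + h2)

lemma gginv (q : ℤ × ℤ) : T.g (T.ginv q) = q := by
  have h := T.hdet
  have h2 := T.he2
  apply Prod.ext <;> simp only [g, ginv]
  · linear_combination q.1 * (T.e * h + h2)
  · linear_combination q.2 * (T.e * h + h2)

lemma g_inj : Function.Injective T.g :=
  Function.LeftInverse.injective T.ginvg

lemma FtoR (p : ℤ × ℤ) : T.F (toR p) = toR (T.g p) := by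
  apply Prod.ext <;> simp only [F, g, toR] <;> push_cast <;> ring

lemma FinvtoR (p : ℤ × ℤ) : T.Finv (toR p) = toR (T.ginv p) := by
  apply Prod.ext <;> simp only [Finv, ginv, toR] <;> push_cast <;> ring

noncomputable def L : (ℝ × ℝ) →ₗ[ℝ] (ℝ × ℝ) where
  toFun p := ((T.a : ℝ) * p.1 + (T.b : ℝ) * p.2, (T.c : ℝ) * p.1 + (T.d : ℝ) * p.2)
  map_add' x y := by apply Prod.ext <;> simp <;> ring
  map_smul' r x := by apply Prod.ext <;> simp <;> ring

noncomputable def Fa : (ℝ × ℝ) →ᵃ[ℝ] (ℝ × ℝ) where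
  toFun := T.F
  linear := T.L
  map_vadd' p v := by
    apply Prod.ext <;> simp [F, L] <;> ring

lemma Fa_coe : ⇑T.Fa = T.F := rfl

noncomputable def Fh : (ℝ × ℝ) ≃ₜ (ℝ × ℝ) where
  toFun := T.F
  invFun := T.Finv
  left_inv := T.FinvF
  right_inv := T.FFinv
  continuous_toFun := by
    apply Continuous.prodMk <;>
      exact (continuous_const.mul (continuous_fst.sub continuous_const)).add
        (continuous_const.mul (continuous_snd.sub continuous_const))
  continuous_invFun := by
    apply Continuous.prodMk
    · exact (continuous_const.mul
        ((continuous_const.mul continuous_fst).sub (continuous_const.mul continuous_snd))).add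
          continuous_const
    · exact (continuous_const.mul
        ((continuous_const.mul continuous_snd).sub (continuous_const.mul continuous_fst))).add
          continuous_const

lemma Fh_coe : ⇑T.Fh = T.F := rfl

lemma image_convexHull (s : Set (ℝ × ℝ)) :
    T.F '' convexHull ℝ s = convexHull ℝ (T.F '' s) := by
  rw [← Fa_coe]; exact T.Fa.image_convexHull s

lemma image_segment (x y : ℝ × ℝ) :
    T.F '' segment ℝ x y = segment ℝ (T.F x) (T.F y) := by
  rw [← Fa_coe]; exact _root_.image_segment ℝ T.Fa x y

lemma image_openSegment (x y : ℝ × ℝ) :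
    T.F '' openSegment ℝ x y = openSegment ℝ (T.F x) (T.F y) := by
  rw [← Fa_coe]; exact _root_.image_openSegment ℝ T.Fa x y

lemma image_frontier (s : Set (ℝ × ℝ)) : T.F '' frontier s = frontier (T.F '' s) := by
  rw [← Fh_coe]; exact T.Fh.image_frontier s

lemma image_interior (s : Set (ℝ × ℝ)) : T.F '' interior s = interior (T.F '' s) := by
  rw [← Fh_coe]; exact T.Fh.image_interior s

lemma mem_image_iff {s : Set (ℝ × ℝ)} {m : ℤ × ℤ} :
    toR m ∈ T.F '' s ↔ toR (T.ginv m) ∈ s := by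
  constructor
  · rintro ⟨x, hx, hFx⟩
    have hx' : T.Finv (toR m) = x := by rw [← hFx, T.FinvF]
    rw [T.FinvtoR] at hx'
    rwa [hx']
  · intro hx
    refine ⟨toR (T.ginv m), hx, ?_⟩
    rw [← T.FinvtoR, T.FFinv]

lemma count_image (s : Set (ℝ × ℝ)) :
    {m : ℤ × ℤ | toR m ∈ T.F '' s}.ncard = {m : ℤ × ℤ | toR m ∈ s}.ncard := by
  have hset : {m : ℤ × ℤ | toR m ∈ T.F '' s} = T.g '' {m : ℤ × ℤ | toR m ∈ s} := by
    ext m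
    constructor
    · intro hm
      rw [Set.mem_setOf_eq, T.mem_image_iff] at hm
      exact ⟨T.ginv m, hm, T.gginv m⟩
    · rintro ⟨n, hn, rfl⟩
      rw [Set.mem_setOf_eq, T.mem_image_iff, T.ginvg]
      exact hn
  rw [hset, Set.ncard_image_of_injective _ T.g_inj]

lemma extreme_image {P : Set (ℝ × ℝ)} {x : ℝ × ℝ} (hx : x ∈ Set.extremePoints ℝ P) :
    T.F x ∈ Set.extremePoints ℝ (T.F '' P) := by
  obtain ⟨hxP, hext⟩ := hx
  refine ⟨Set.mem_image_of_mem _ hxP, ?_⟩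
  rintro x1 ⟨y1, hy1, rfl⟩ x2 ⟨y2, hy2, rfl⟩ hseg
  rw [← T.image_openSegment] at hseg
  obtain ⟨z, hz, hzx⟩ := hseg
  have hzx' : z = x := by
    have := congrArg T.Finv hzx
    rwa [T.FinvF, T.FinvF] at this
  subst hzx'
  rw [hext hy1 hy2 hz]

end Uni



lemma card_le_of_inj {n : ℕ} (f : Fin n → ℤ × ℤ) (S : Set (ℤ × ℤ))
    (hf : ∀ i, f i ∈ S) (hinjf : Function.Injective f) (hS : S.Finite) : n ≤ S.ncard := by
  have h1 : (Finset.univ.image f).card = n := by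
    rw [Finset.card_image_of_injective _ hinjf, Finset.card_univ, Fintype.card_fin]
  have h2 : ↑(Finset.univ.image f) ⊆ S := by
    intro x hx
    simp only [Finset.coe_image, Finset.coe_univ, Set.image_univ, Set.mem_range] at hx
    obtain ⟨i, rfl⟩ := hx
    exact hf i
  rw [← h1, ← Set.ncard_coe_finset]
  exact Set.ncard_le_ncard h2 hS

lemma horiz_mid {P : Set (ℝ × ℝ)} {A B C : ℤ × ℤ}
    (hA : toR A ∈ P) (hC : toR C ∈ P) (hB : toR B ∈ Set.extremePoints ℝ P)
    (hyA : A.2 = B.2) (hyC : C.2 = B.2) (hx1 : A.1 < B.1) (hx2 : B.1 < C.1) : False := by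
  have hAC : A.1 < C.1 := lt_trans hx1 hx2
  have hACx : (0:ℝ) < ((C.1 : ℝ) - (A.1 : ℝ)) := by
    have : (A.1 : ℝ) < (C.1 : ℝ) := by exact_mod_cast hAC
    linarith
  have hABx : (0:ℝ) < ((B.1 : ℝ) - (A.1 : ℝ)) := by
    have : (A.1 : ℝ) < (B.1 : ℝ) := by exact_mod_cast hx1
    linarith
  have hBCx : (0:ℝ) < ((C.1 : ℝ) - (B.1 : ℝ)) := by
    have : (B.1 : ℝ) < (C.1 : ℝ) := by exact_mod_cast hx2
    linarith
  set t : ℝ := ((B.1 : ℝ) - (A.1 : ℝ)) / ((C.1 : ℝ) - (A.1 : ℝ)) with ht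
  have h0t : 0 < t := div_pos hABx hACx
  have ht1 : t < 1 := by
    rw [ht, div_lt_one hACx]; linarith
  have hmem : toR B ∈ openSegment ℝ (toR A) (toR C) := by
    refine ⟨1 - t, t, by linarith, h0t, by ring, ?_⟩
    have hACne : ((C.1 : ℝ) - (A.1 : ℝ)) ≠ 0 := ne_of_gt hACx
    apply Prod.ext
    · simp only [toR, Prod.fst_add, Prod.smul_fst, smul_eq_mul]
      rw [ht]
      field_simp
      ring
    · simp only [toR, Prod.snd_add, Prod.smul_snd, smul_eq_mul]
      have e1 : ((A.2 : ℤ) : ℝ) = ((B.2 : ℤ) : ℝ) := by exact_mod_cast hyA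
      have e2 : ((C.2 : ℤ) : ℝ) = ((B.2 : ℤ) : ℝ) := by exact_mod_cast hyC
      rw [e1, e2]; ring
  have hA' := hB.2 hA hC hmem
  have : (A.1 : ℝ) = (B.1 : ℝ) := congrArg Prod.fst hA'
  have : A.1 = B.1 := by exact_mod_cast this
  omega

lemma main_norm (v : Fin 5 → ℤ × ℤ) (P : Set (ℝ × ℝ))
    (hP : P = convexHull ℝ (Set.range (toR ∘ v)))
    (hinj : Function.Injective v)
    (hvert : ∀ i, toR (v i) ∈ Set.extremePoints ℝ P)
    (hedge : ∀ i : Fin 5, segment ℝ (toR (v i)) (toR (v (i + 1))) ⊆ frontier P)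
    (h0 : v 0 = (0, 0)) (h4 : v 4 = (4, 0))
    (hy : ∀ i : Fin 5, i ≠ 0 → i ≠ 4 → 1 ≤ (v i).2) :
    (9 ≤ {m : ℤ × ℤ | toR m ∈ frontier P}.ncard ∧
        1 ≤ {m : ℤ × ℤ | toR m ∈ interior P}.ncard) ∨
      (8 ≤ {m : ℤ × ℤ | toR m ∈ frontier P}.ncard ∧
        2 ≤ {m : ℤ × ℤ | toR m ∈ interior P}.ncard) := by
  have hPc : Convex ℝ P := hP ▸ convex_convexHull ℝ _
  have hPcomp : IsCompact P := hP ▸ (Set.finite_range (toR ∘ v)).isCompact_convexHull ℝ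
  have hPclosed : IsClosed P := hPcomp.isClosed
  have hPbdd := hPcomp.isBounded
  have hBfin : {m : ℤ × ℤ | toR m ∈ frontier P}.Finite :=
    lattice_finite (hPbdd.subset hPclosed.frontier_subset)
  have hIfin : {m : ℤ × ℤ | toR m ∈ interior P}.Finite :=
    lattice_finite (hPbdd.subset interior_subset)
  have hvmem : ∀ i, toR (v i) ∈ P := fun i => hP ▸ subset_convexHull ℝ _ ⟨i, rfl⟩
  have ht0 : toR (v 0) = ((0:ℝ), (0:ℝ)) := by rw [h0]; simp [toR]
  have ht4 : toR (v 4) = ((4:ℝ), (0:ℝ)) := by rw [h4]; simp [toR]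
  have h41 : (4 : Fin 5) + 1 = 0 := by decide
  have hbase : ∀ k : ℤ, 0 ≤ k → k ≤ 4 → toR (k, 0) ∈ frontier P := by
    intro k hk0 hk4
    apply hedge 4
    rw [h41, ht0, ht4]
    have hk4R : (k : ℝ) ≤ 4 := by exact_mod_cast hk4
    have hk0R : (0 : ℝ) ≤ (k : ℝ) := by exact_mod_cast hk0
    refine ⟨(k:ℝ)/4, 1 - (k:ℝ)/4, by positivity, by linarith, by ring, ?_⟩
    apply Prod.ext
    · simp only [toR, Prod.fst_add, Prod.smul_fst, smul_eq_mul]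
      field_simp
      ring
    · simp only [toR, Prod.snd_add, Prod.smul_snd, smul_eq_mul]
      norm_num
  have hvfront : ∀ i, toR (v i) ∈ frontier P := fun i => hedge i (left_mem_segment ℝ _ _)
  have hy1 : 1 ≤ (v 1).2 := hy 1 (by decide) (by decide)
  have hy2 : 1 ≤ (v 2).2 := hy 2 (by decide) (by decide)
  have hy3 : 1 ≤ (v 3).2 := hy 3 (by decide) (by decide)
  have hvb : ∀ (k : ℤ) (i : Fin 5), 1 ≤ (v i).2 → ((k, (0:ℤ)) : ℤ × ℤ) ≠ v i := by
    intro k i h1 h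
    have h2 := congrArg Prod.snd h
    dsimp at h2
    omega
  have hbb : ∀ k l : ℤ, k ≠ l → ((k, (0:ℤ)) : ℤ × ℤ) ≠ (l, 0) := by
    intro k l hkl h
    exact hkl (congrArg Prod.fst h)
  have hhigh : ∃ j : Fin 5, (j = 1 ∨ j = 2 ∨ j = 3) ∧ 2 ≤ (v j).2 := by
    by_contra hcon
    push_neg at hcon
    have e1 : (v 1).2 = 1 := by have := hcon 1 (Or.inl rfl); omega
    have e2 : (v 2).2 = 1 := by have := hcon 2 (Or.inr (Or.inl rfl)); omega
    have e3 : (v 3).2 = 1 := by have := hcon 3 (Or.inr (Or.inr rfl)); omega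
    have hx12 : (v 1).1 ≠ (v 2).1 := fun h =>
      (by decide : (1 : Fin 5) ≠ 2) (hinj (Prod.ext h (by omega)))
    have hx13 : (v 1).1 ≠ (v 3).1 := fun h =>
      (by decide : (1 : Fin 5) ≠ 3) (hinj (Prod.ext h (by omega)))
    have hx23 : (v 2).1 ≠ (v 3).1 := fun h =>
      (by decide : (2 : Fin 5) ≠ 3) (hinj (Prod.ext h (by omega)))
    rcases (by omega :
        ((v 1).1 < (v 2).1 ∧ (v 2).1 < (v 3).1) ∨ ((v 1).1 < (v 3).1 ∧ (v 3).1 < (v 2).1) ∨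
        ((v 2).1 < (v 1).1 ∧ (v 1).1 < (v 3).1) ∨ ((v 2).1 < (v 3).1 ∧ (v 3).1 < (v 1).1) ∨
        ((v 3).1 < (v 1).1 ∧ (v 1).1 < (v 2).1) ∨ ((v 3).1 < (v 2).1 ∧ (v 2).1 < (v 1).1)) with
      (⟨l1, l2⟩ | ⟨l1, l2⟩ | ⟨l1, l2⟩ | ⟨l1, l2⟩ | ⟨l1, l2⟩ | ⟨l1, l2⟩)
    · exact horiz_mid (hvmem 1) (hvmem 3) (hvert 2) (by omega) (by omega) l1 l2
    · exact horiz_mid (hvmem 1) (hvmem 2) (hvert 3) (by omega) (by omega) l1 l2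
    · exact horiz_mid (hvmem 2) (hvmem 3) (hvert 1) (by omega) (by omega) l1 l2
    · exact horiz_mid (hvmem 2) (hvmem 1) (hvert 3) (by omega) (by omega) l1 l2
    · exact horiz_mid (hvmem 3) (hvmem 2) (hvert 1) (by omega) (by omega) l1 l2
    · exact horiz_mid (hvmem 3) (hvmem 1) (hvert 2) (by omega) (by omega) l1 l2
  obtain ⟨j, hj, hH⟩ := hhigh
  set c : ℤ := (v j).1 with hc
  set H : ℤ := (v j).2 with hHdef
  have htj : toR (v j) = ((c : ℝ), (H : ℝ)) := rfl
  have hint : ∀ m : ℤ, c < H * m → H * m < c + 4 * H - 4 → toR (m, 1) ∈ interior P := by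
    intro m hma hmb
    have hmaR : (c : ℝ) < (H : ℝ) * (m : ℝ) := by exact_mod_cast hma
    have hmbR : (H : ℝ) * (m : ℝ) < (c : ℝ) + 4 * (H : ℝ) - 4 := by exact_mod_cast hmb
    have hH2 : (2 : ℝ) ≤ (H : ℝ) := by exact_mod_cast hH
    apply tri_interior hPc (hvmem 0) (hvmem 4) (hvmem j)
    · rw [ht0, htj]
      simp only [cr, toR, Prod.fst_sub, Prod.snd_sub]
      push_cast
      nlinarith [hmaR, mul_comm (m : ℝ) (H : ℝ)]
    · rw [ht0, ht4]
      simp only [cr, toR, Prod.fst_sub, Prod.snd_sub]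
      norm_num
    · rw [ht0, ht4, htj]
      simp only [cr, toR, Prod.fst_sub, Prod.snd_sub]
      push_cast
      nlinarith [hmbR, mul_comm (m : ℝ) (H : ℝ)]
  have hdiv := Int.mul_ediv_add_emod c H
  have hHpos : (0 : ℤ) < H := by omega
  have hmod0 : 0 ≤ c % H := Int.emod_nonneg c (ne_of_gt hHpos)
  have hmodH : c % H < H := Int.emod_lt_of_pos c hHpos
  set k0 : ℤ := c / H with hk0
  have hm1 : toR (k0 + 1, 1) ∈ interior P := by
    apply hint
    · have e1 : H * (k0 + 1) = H * k0 + H := by ring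
      linarith
    · have e1 : H * (k0 + 1) = H * k0 + H := by ring
      linarith
  have hm1mem : ((k0 + 1, 1) : ℤ × ℤ) ∈ {m : ℤ × ℤ | toR m ∈ interior P} := hm1
  have hI1 : 1 ≤ {m : ℤ × ℤ | toR m ∈ interior P}.ncard := by
    have := (Set.ncard_pos hIfin).mpr ⟨_, hm1mem⟩
    omega
  have hB8 : 8 ≤ {m : ℤ × ℤ | toR m ∈ frontier P}.ncard := by
    apply card_le_of_inj
      ![((0:ℤ),(0:ℤ)), (1,0), (2,0), (3,0), (4,0), v 1, v 2, v 3]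
      _ ?_ ?_ hBfin
    · intro i
      fin_cases i
      · exact hbase 0 (by norm_num) (by norm_num)
      · exact hbase 1 (by norm_num) (by norm_num)
      · exact hbase 2 (by norm_num) (by norm_num)
      · exact hbase 3 (by norm_num) (by norm_num)
      · exact hbase 4 (by norm_num) (by norm_num)
      · exact hvfront 1
      · exact hvfront 2
      · exact hvfront 3
    · intro i i' hii'
      fin_cases i <;> fin_cases i' <;>
        first
          | rfl
          | (exfalso; exact absurd (hinj hii') (by decide))
          | (exfalso; exact hbb _ _ (by norm_num) hii')
          | (exfalso; exact hvb _ 1 hy1 hii')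
          | (exfalso; exact hvb _ 2 hy2 hii')
          | (exfalso; exact hvb _ 3 hy3 hii')
          | (exfalso; exact hvb _ 1 hy1 hii'.symm)
          | (exfalso; exact hvb _ 2 hy2 hii'.symm)
          | (exfalso; exact hvb _ 3 hy3 hii'.symm)
  by_cases htight : H = 2 ∧ c % H = 0
  · obtain ⟨hH2, hcev⟩ := htight
    have hck : c = 2 * k0 := by
      have : H * k0 = 2 * k0 := by rw [hH2]
      linarith
    have hLopen : toR (k0, 1) ∈ openSegment ℝ (toR (v 0)) (toR (v j)) := by
      rw [ht0, htj]
      refine ⟨1/2, 1/2, by norm_num, by norm_num, by norm_num, ?_⟩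
      apply Prod.ext
      · simp only [toR, Prod.fst_add, Prod.smul_fst, smul_eq_mul]
        have : (c : ℝ) = 2 * (k0 : ℝ) := by exact_mod_cast hck
        rw [this]; ring
      · simp only [toR, Prod.snd_add, Prod.smul_snd, smul_eq_mul]
        have : (H : ℝ) = 2 := by exact_mod_cast hH2
        rw [this]; norm_num
    have hLP : toR (k0, 1) ∈ P :=
      hPc.segment_subset (hvmem 0) (hvmem j) (openSegment_subset_segment ℝ _ _ hLopen)
    have hLnv : ∀ i : Fin 5, v i ≠ (k0, 1) := by
      intro i hvi
      have hopen' : toR (v i) ∈ openSegment ℝ (toR (v 0)) (toR (v j)) := by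
        rw [hvi]; exact hLopen
      have hq := (hvert i).2 (hvmem 0) (hvmem j) hopen'
      rw [hvi, ht0] at hq
      have := congrArg Prod.snd hq
      simp [toR] at this
    by_cases hLint : toR (k0, 1) ∈ interior P
    · right
      refine ⟨hB8, ?_⟩
      have h2 : (1 : ℕ) < {m : ℤ × ℤ | toR m ∈ interior P}.ncard :=
        (Set.one_lt_ncard_iff hIfin).mpr
          ⟨(k0, 1), (k0 + 1, 1), hLint, hm1mem, by simp⟩
      omega
    · left
      have hLfront : toR (k0, 1) ∈ frontier P := by
        rw [hPclosed.frontier_eq]; exact ⟨hLP, hLint⟩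
      refine ⟨?_, hI1⟩
      have hbL : ∀ k : ℤ, ((k, (0:ℤ)) : ℤ × ℤ) ≠ (k0, 1) := by
        intro k h
        have h2 := congrArg Prod.snd h
        dsimp at h2
        omega
      apply card_le_of_inj
        ![((0:ℤ),(0:ℤ)), (1,0), (2,0), (3,0), (4,0), v 1, v 2, v 3, (k0, 1)]
        _ ?_ ?_ hBfin
      · intro i
        fin_cases i
        · exact hbase 0 (by norm_num) (by norm_num)
        · exact hbase 1 (by norm_num) (by norm_num)
        · exact hbase 2 (by norm_num) (by norm_num)
        · exact hbase 3 (by norm_num) (by norm_num)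
        · exact hbase 4 (by norm_num) (by norm_num)
        · exact hvfront 1
        · exact hvfront 2
        · exact hvfront 3
        · exact hLfront
      · intro i i' hii'
        fin_cases i <;> fin_cases i' <;>
          first
            | rfl
            | (exfalso; exact absurd (hinj hii') (by decide))
            | (exfalso; exact hbb _ _ (by norm_num) hii')
            | (exfalso; exact hvb _ 1 hy1 hii')
            | (exfalso; exact hvb _ 2 hy2 hii')
            | (exfalso; exact hvb _ 3 hy3 hii')
            | (exfalso; exact hvb _ 1 hy1 hii'.symm)
            | (exfalso; exact hvb _ 2 hy2 hii'.symm)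
            | (exfalso; exact hvb _ 3 hy3 hii'.symm)
            | (exfalso; exact hLnv 1 hii')
            | (exfalso; exact hLnv 2 hii')
            | (exfalso; exact hLnv 3 hii')
            | (exfalso; exact hLnv 1 hii'.symm)
            | (exfalso; exact hLnv 2 hii'.symm)
            | (exfalso; exact hLnv 3 hii'.symm)
            | (exfalso; exact hbL _ hii')
            | (exfalso; exact hbL _ hii'.symm)
  · right
    refine ⟨hB8, ?_⟩
    have hr4 : 0 < c % H + 2 * H - 4 := by
      rcases eq_or_lt_of_le hH with h2 | h3
      · have hne := fun hc' => htight ⟨h2.symm, hc'⟩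
        omega
      · omega
    have hm2 : toR (k0 + 2, 1) ∈ interior P := by
      apply hint
      · have e1 : H * (k0 + 2) = H * k0 + 2 * H := by ring
        linarith
      · have e1 : H * (k0 + 2) = H * k0 + 2 * H := by ring
        linarith
    have h2 : (1 : ℕ) < {m : ℤ × ℤ | toR m ∈ interior P}.ncard :=
      (Set.one_lt_ncard_iff hIfin).mpr
        ⟨(k0 + 1, 1), (k0 + 2, 1), hm1mem, hm2, by simp⟩
    omega



end S19

/-- For a convex lattice pentagon `P = conv(v 0, …, v 4)` (vertices in cyclic order)
whose edge from `v 0` to `v 4` contains exactly 5 lattice points (lattice length 4):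
either `P` has at least 9 boundary lattice points and at least 1 interior lattice
point, or at least 8 boundary lattice points and at least 2 interior lattice points;
in either case `B + 2I − 2 ≥ 9`. -/
theorem stmt19 (v : Fin 5 → ℤ × ℤ) (P : Set (ℝ × ℝ))
    (hP : P = convexHull ℝ (Set.range (toR ∘ v)))
    (hdim : (interior P).Nonempty)
    (hinj : Function.Injective v)
    (hvert : ∀ i, toR (v i) ∈ Set.extremePoints ℝ P)
    (hedge : ∀ i : Fin 5, segment ℝ (toR (v i)) (toR (v (i + 1))) ⊆ frontier P)
    (hlen : {m : ℤ × ℤ | toR m ∈ segment ℝ (toR (v 0)) (toR (v 4))}.ncard = 5) :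
    ((9 ≤ {m : ℤ × ℤ | toR m ∈ frontier P}.ncard ∧
        1 ≤ {m : ℤ × ℤ | toR m ∈ interior P}.ncard) ∨
      (8 ≤ {m : ℤ × ℤ | toR m ∈ frontier P}.ncard ∧
        2 ≤ {m : ℤ × ℤ | toR m ∈ interior P}.ncard)) ∧
    9 ≤ {m : ℤ × ℤ | toR m ∈ frontier P}.ncard +
        2 * {m : ℤ × ℤ | toR m ∈ interior P}.ncard - 2 := by
  classical
  have hPc : Convex ℝ P := hP ▸ convex_convexHull ℝ _
  have hPcomp : IsCompact P := hP ▸ (Set.finite_range (toR ∘ v)).isCompact_convexHull ℝ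
  have hPclosed : IsClosed P := hPcomp.isClosed
  have hvmem : ∀ i, toR (v i) ∈ P := fun i => hP ▸ subset_convexHull ℝ _ ⟨i, rfl⟩
  have hne04 : v 0 ≠ v 4 := fun h => (by decide : (0 : Fin 5) ≠ 4) (hinj h)
  obtain ⟨d1, d2, hΔ1, hΔ2, hco⟩ := S19.seg_count hne04 hlen
  have h41 : (4 : Fin 5) + 1 = 0 := by decide
  -- real cast abbreviations
  have hx4R : ((v 4).1 : ℝ) = ((v 0).1 : ℝ) + 4 * (d1 : ℝ) := by
    have h' : (v 4).1 = (v 0).1 + 4 * d1 := by linarith [hΔ1]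
    exact_mod_cast h'
  have hy4R : ((v 4).2 : ℝ) = ((v 0).2 : ℝ) + 4 * (d2 : ℝ) := by
    have h' : (v 4).2 = (v 0).2 + 4 * d2 := by linarith [hΔ2]
    exact_mod_cast h'
  set Kf : Fin 5 → ℤ := fun i => d1 * ((v i).2 - (v 0).2) - d2 * ((v i).1 - (v 0).1) with hKf
  -- toR equality to pair equality
  have toR_inj : ∀ {A B : ℤ × ℤ}, toR A = toR B → A = B := by
    intro A B h
    have e1 := congrArg Prod.fst h
    have e2 := congrArg Prod.snd h
    simp only [toR] at e1 e2
    exact Prod.ext (by exact_mod_cast e1) (by exact_mod_cast e2)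
  -- Claim 1 : off-line vertices
  have hK : ∀ i : Fin 5, i ≠ 0 → i ≠ 4 → Kf i ≠ 0 := by
    intro i hi0 hi4 hKeq
    rw [hKf] at hKeq
    have hpar : ((v i).1 - (v 0).1) * d2 = ((v i).2 - (v 0).2) * d1 := by
      linear_combination -hKeq
    obtain ⟨k, hk1, hk2⟩ := S19.par_int hco hpar
    have hkne0 : k ≠ 0 := by
      rintro rfl
      simp only [zero_mul] at hk1 hk2
      have hvv : v i = v 0 := Prod.ext (by omega) (by omega)
      exact hi0 (hinj hvv)
    have hkne4 : k ≠ 4 := by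
      rintro rfl
      have hvv : v i = v 4 := Prod.ext (by omega) (by omega)
      exact hi4 (hinj hvv)
    have hxiR : ((v i).1 : ℝ) = ((v 0).1 : ℝ) + (k : ℝ) * (d1 : ℝ) := by
      have h' : (v i).1 = (v 0).1 + k * d1 := by linarith [hk1]
      exact_mod_cast h'
    have hyiR : ((v i).2 : ℝ) = ((v 0).2 : ℝ) + (k : ℝ) * (d2 : ℝ) := by
      have h' : (v i).2 = (v 0).2 + k * d2 := by linarith [hk2]
      exact_mod_cast h'
    rcases (by omega : k < 0 ∨ (0 < k ∧ k < 4) ∨ 4 < k) with hk | ⟨hka, hkb⟩ | hk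
    · -- v 0 strictly between v i and v 4
      have hkR : (k : ℝ) < 0 := by exact_mod_cast hk
      have hden : (0 : ℝ) < 4 - (k : ℝ) := by linarith
      have hop : toR (v 0) ∈ openSegment ℝ (toR (v i)) (toR (v 4)) := by
        refine ⟨4 / (4 - (k : ℝ)), -(k : ℝ) / (4 - (k : ℝ)), by positivity,
          by apply div_pos <;> linarith, by field_simp; ring, ?_⟩
        apply Prod.ext
        · simp only [toR, Prod.fst_add, Prod.smul_fst, smul_eq_mul]
          rw [hxiR, hx4R]
          field_simp
          ring
        · simp only [toR, Prod.snd_add, Prod.smul_snd, smul_eq_mul]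
          rw [hyiR, hy4R]
          field_simp
          ring
      have hei := (hvert 0).2 (hvmem i) (hvmem 4) hop
      exact hi0 (hinj (toR_inj hei))
    · -- v i strictly between v 0 and v 4
      have hkaR : (0 : ℝ) < (k : ℝ) := by exact_mod_cast hka
      have hkbR : (k : ℝ) < 4 := by exact_mod_cast hkb
      have hop : toR (v i) ∈ openSegment ℝ (toR (v 0)) (toR (v 4)) := by
        refine ⟨1 - (k : ℝ) / 4, (k : ℝ) / 4, by nlinarith, by positivity, by ring, ?_⟩
        apply Prod.ext
        · simp only [toR, Prod.fst_add, Prod.smul_fst, smul_eq_mul]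
          rw [hxiR, hx4R]
          field_simp
          ring
        · simp only [toR, Prod.snd_add, Prod.smul_snd, smul_eq_mul]
          rw [hyiR, hy4R]
          field_simp
          ring
      have he0 := (hvert i).2 (hvmem 0) (hvmem 4) hop
      exact hi0 ((hinj (toR_inj he0)).symm ▸ rfl)
    · -- v 4 strictly between v 0 and v i
      have hkR : (4 : ℝ) < (k : ℝ) := by exact_mod_cast hk
      have hkpos : (0 : ℝ) < (k : ℝ) := by linarith
      have hop : toR (v 4) ∈ openSegment ℝ (toR (v 0)) (toR (v i)) := by
        refine ⟨1 - 4 / (k : ℝ), 4 / (k : ℝ), ?_, by positivity, by ring, ?_⟩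
        · have : 4 / (k : ℝ) < 1 := by rw [div_lt_one hkpos]; linarith
          linarith
        · apply Prod.ext
          · simp only [toR, Prod.fst_add, Prod.smul_fst, smul_eq_mul]
            rw [hxiR, hx4R]
            field_simp
            ring
          · simp only [toR, Prod.snd_add, Prod.smul_snd, smul_eq_mul]
            rw [hyiR, hy4R]
            field_simp
            ring
      have hei := (hvert 4).2 (hvmem 0) (hvmem i) hop
      exact hne04 (toR_inj hei)
  -- Claim 2 : no mixed signs
  have hnomix : ∀ i i' : Fin 5, i ≠ 0 → i ≠ 4 → i' ≠ 0 → i' ≠ 4 →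
      0 < Kf i → Kf i' < 0 → False := by
    intro i j hi0 hi4 hj0 hj4 hKi hKj
    set x0 : ℝ := ((v 0).1 : ℝ) with hx0
    set y0 : ℝ := ((v 0).2 : ℝ) with hy0
    set xi : ℝ := ((v i).1 : ℝ) with hxi
    set yi : ℝ := ((v i).2 : ℝ) with hyi
    set xj : ℝ := ((v j).1 : ℝ) with hxj
    set yj : ℝ := ((v j).2 : ℝ) with hyj
    set e1 : ℝ := (d1 : ℝ) with he1
    set e2 : ℝ := (d2 : ℝ) with he2
    have hKC : (0 : ℝ) < e1 * (yi - y0) - e2 * (xi - x0) := by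
      rw [he1, he2, hxi, hyi, hx0, hy0]
      exact_mod_cast hKi
    have hKD : e1 * (yj - y0) - e2 * (xj - x0) < 0 := by
      rw [he1, he2, hxj, hyj, hx0, hy0]
      exact_mod_cast hKj
    have hep : toR (v 4) = (x0 + 4 * e1, y0 + 4 * e2) := by
      apply Prod.ext
      · exact hx4R
      · exact hy4R
    have hcontra : ∀ p : ℝ × ℝ, p ∈ interior P →
        p ∈ segment ℝ (toR (v 4)) (toR (v 0)) → False := by
      intro p hpint hpseg
      have hpfr : p ∈ frontier P := by
        rw [← h41] at hpseg
        exact hedge 4 hpseg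
      rw [hPclosed.frontier_eq] at hpfr
      exact hpfr.2 hpint
    by_cases hN : (xj - x0) * (yi - y0) - (yj - y0) * (xi - x0) <
        2 * ((e1 * (yi - y0) - e2 * (xi - x0)) - (e1 * (yj - y0) - e2 * (xj - x0)))
    · -- apex at v 4, point x0+2e1
      set p : ℝ × ℝ := (x0 + 2 * e1, y0 + 2 * e2) with hpd
      have hpint : p ∈ interior P := by
        apply S19.tri_interior hPc (hvmem 4) (hvmem i) (hvmem j)
        · rw [hep]
          simp only [S19.cr, Prod.fst_sub, Prod.snd_sub, hpd, toR, ← hxj, ← hyj]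
          linarith [hKD]
        · rw [hep]
          simp only [S19.cr, Prod.fst_sub, Prod.snd_sub, hpd, toR, ← hxi, ← hyi]
          linarith [hKC]
        · rw [hep]
          simp only [S19.cr, Prod.fst_sub, Prod.snd_sub, hpd, toR, ← hxi, ← hyi, ← hxj, ← hyj]
          linarith [hN, hKC, hKD]
      apply hcontra p hpint
      refine ⟨1/2, 1/2, by norm_num, by norm_num, by norm_num, ?_⟩
      rw [hep]
      apply Prod.ext
      · simp only [toR, Prod.fst_add, Prod.smul_fst, smul_eq_mul, hpd, ← hx0]
        ring
      · simp only [toR, Prod.snd_add, Prod.smul_snd, smul_eq_mul, hpd, ← hy0]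
        ring
    · push_neg at hN
      set p : ℝ × ℝ := (x0 + e1, y0 + e2) with hpd
      have hpint : p ∈ interior P := by
        apply S19.tri_interior hPc (hvmem 0) (hvmem j) (hvmem i)
        · simp only [S19.cr, Prod.fst_sub, Prod.snd_sub, hpd, toR, ← hxi, ← hyi, ← hx0, ← hy0]
          linarith [hKC]
        · simp only [S19.cr, Prod.fst_sub, Prod.snd_sub, hpd, toR, ← hxj, ← hyj, ← hx0, ← hy0]
          linarith [hKD]
        · simp only [S19.cr, Prod.fst_sub, Prod.snd_sub, hpd, toR, ← hxi, ← hyi, ← hxj, ← hyj,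
            ← hx0, ← hy0]
          linarith [hN, hKC, hKD]
      apply hcontra p hpint
      refine ⟨1/4, 3/4, by norm_num, by norm_num, by norm_num, ?_⟩
      rw [hep]
      apply Prod.ext
      · simp only [toR, Prod.fst_add, Prod.smul_fst, smul_eq_mul, hpd, ← hx0]
        ring
      · simp only [toR, Prod.snd_add, Prod.smul_snd, smul_eq_mul, hpd, ← hy0]
        ring
  -- choose the sign
  set s : ℤ := if 0 < Kf 1 then 1 else -1 with hs
  have hsval : s = 1 ∨ s = -1 := by
    rw [hs]; split <;> simp
  have hK1 := hK 1 (by decide) (by decide)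
  have hsK : ∀ i : Fin 5, i ≠ 0 → i ≠ 4 → 1 ≤ s * Kf i := by
    intro i hi0 hi4
    have hKi := hK i hi0 hi4
    by_cases h1 : 0 < Kf 1
    · have hs1 : s = 1 := by rw [hs, if_pos h1]
      have : 0 < Kf i := by
        rcases lt_or_gt_of_ne hKi with hlt | hgt
        · exact absurd (hnomix 1 i (by decide) (by decide) hi0 hi4 h1 hlt) (by simp)
        · exact hgt
      rw [hs1]; omega
    · have hs1 : s = -1 := by rw [hs, if_neg h1]
      have hK1n : Kf 1 < 0 := by omega
      have : Kf i < 0 := by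
        rcases lt_or_gt_of_ne hKi with hlt | hgt
        · exact hlt
        · exact absurd (hnomix i 1 hi0 hi4 (by decide) (by decide) hgt hK1n) (by simp)
      rw [hs1]; omega
  -- Bezout coefficients
  set A : ℤ := Int.gcdA d1 d2 with hA
  set B : ℤ := Int.gcdB d1 d2 with hB
  have hbez : (1 : ℤ) = d1 * A + d2 * B := by
    rw [hA, hB, ← Int.gcd_eq_gcd_ab d1 d2, hco]
    norm_num
  set T : S19.Uni :=
    { a := A, b := B, c := -s * d2, d := s * d1, e := s, t1 := (v 0).1, t2 := (v 0).2,
      hdet := by linear_combination (-s) * hbez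
      he := hsval } with hT
  set v' : Fin 5 → ℤ × ℤ := T.g ∘ v with hv'
  set P' : Set (ℝ × ℝ) := T.F '' P with hP'd
  have hP' : P' = convexHull ℝ (Set.range (toR ∘ v')) := by
    have hcomp : T.F ∘ (toR ∘ v) = toR ∘ v' := funext fun i => T.FtoR (v i)
    rw [hP'd, hP, T.image_convexHull, ← Set.range_comp, hcomp]
  have hinj' : Function.Injective v' := T.g_inj.comp hinj
  have hvert' : ∀ i, toR (v' i) ∈ Set.extremePoints ℝ P' := by
    intro i
    rw [show toR (v' i) = T.F (toR (v i)) from (T.FtoR (v i)).symm]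
    exact T.extreme_image (hvert i)
  have hedge' : ∀ i : Fin 5, segment ℝ (toR (v' i)) (toR (v' (i + 1))) ⊆ frontier P' := by
    intro i
    rw [show toR (v' i) = T.F (toR (v i)) from (T.FtoR (v i)).symm,
      show toR (v' (i + 1)) = T.F (toR (v (i + 1))) from (T.FtoR (v (i + 1))).symm,
      ← T.image_segment, hP'd, ← T.image_frontier]
    exact Set.image_mono (hedge i)
  have h0' : v' 0 = (0, 0) := by
    apply Prod.ext <;> simp [hv', S19.Uni.g, hT]
  have h4' : v' 4 = (4, 0) := by
    apply Prod.ext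
    · show A * ((v 4).1 - (v 0).1) + B * ((v 4).2 - (v 0).2) = 4
      rw [hΔ1, hΔ2]
      linear_combination (-4) * hbez
    · show -s * d2 * ((v 4).1 - (v 0).1) + s * d1 * ((v 4).2 - (v 0).2) = 0
      rw [hΔ1, hΔ2]
      ring
  have hy' : ∀ i : Fin 5, i ≠ 0 → i ≠ 4 → 1 ≤ (v' i).2 := by
    intro i hi0 hi4
    have hval : (v' i).2 = s * Kf i := by
      show -s * d2 * ((v i).1 - (v 0).1) + s * d1 * ((v i).2 - (v 0).2) = s * Kf i
      rw [hKf]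
      ring
    rw [hval]
    exact hsK i hi0 hi4
  have hconc := S19.main_norm v' P' hP' hinj' hvert' hedge' h0' h4' hy'
  have hBc : {m : ℤ × ℤ | toR m ∈ frontier P'}.ncard =
      {m : ℤ × ℤ | toR m ∈ frontier P}.ncard := by
    have : frontier P' = T.F '' frontier P := by rw [hP'd, T.image_frontier]
    rw [this, T.count_image]
  have hIc : {m : ℤ × ℤ | toR m ∈ interior P'}.ncard =
      {m : ℤ × ℤ | toR m ∈ interior P}.ncard := by
    have : interior P' = T.F '' interior P := by rw [hP'd, T.image_interior]
    rw [this, T.count_image]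
  rw [hBc, hIc] at hconc
  refine ⟨hconc, ?_⟩
  rcases hconc with ⟨h1, h2⟩ | ⟨h1, h2⟩ <;> omega
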